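/- Let Δ be an infinite set and Δ⁺ its one-point compactification with Δ discrete. For n ≥ 2 and d with 2 ≤ d ≤ n, fix a (d−2)-element subset D ⊂ Δ. Then the map sending a two-element subset z of (Δ \ D)⁺ to z ∪ D is a closed topological embedding of (Δ \ D)⁺_(2) into Δ⁺_(d), where subscript (k) denotes the space of exactly-k-element subsets with the Vietoris topology. -/

import Mathlib

/-- Type synonym: the hyperspace of subsets of `Z` with the Vietoris topology. -/
def Hyper (Z : Type*) : Type _ := Set Z

/-- The underlying set of a point of the hyperspace. -/
def Hyper.toSet {Z : Type*} (A : Hyper Z) : Set Z := A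

/-- The Vietoris topology, generated by the sets `{A | A ⊆ W}` and
`{A | A ∩ W ≠ ∅}` for open `W`. -/
instance instHyperTop (Z : Type*) [TopologicalSpace Z] : TopologicalSpace (Hyper Z) :=
  TopologicalSpace.generateFrom
    {s | ∃ W : Set Z, IsOpen W ∧
      (s = {A : Hyper Z | A.toSet ⊆ W} ∨ s = {A : Hyper Z | (A.toSet ∩ W).Nonempty})}

/-- `Z_[n]`: nonempty subsets of `Z` of cardinality at most `n`, with the
Vietoris topology. -/
def SubLe (Z : Type*) [TopologicalSpace Z] (n : ℕ) : Type _ :=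
  {A : Hyper Z // A.toSet.Nonempty ∧ A.toSet.Finite ∧ A.toSet.ncard ≤ n}

instance (Z : Type*) [TopologicalSpace Z] (n : ℕ) : TopologicalSpace (SubLe Z n) :=
  inferInstanceAs (TopologicalSpace
    {A : Hyper Z // A.toSet.Nonempty ∧ A.toSet.Finite ∧ A.toSet.ncard ≤ n})

/-- `Z_(k)`: subsets of `Z` of cardinality exactly `k`, with the Vietoris topology. -/
def SubEq (Z : Type*) [TopologicalSpace Z] (k : ℕ) : Type _ :=
  {A : Hyper Z // A.toSet.Finite ∧ A.toSet.ncard = k}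

instance (Z : Type*) [TopologicalSpace Z] (k : ℕ) : TopologicalSpace (SubEq Z k) :=
  inferInstanceAs (TopologicalSpace {A : Hyper Z // A.toSet.Finite ∧ A.toSet.ncard = k})

/-- The incidence correspondence `Z_[n]^⊆ = {(z, x) : z ∈ x}`. -/
def Inc (Z : Type*) [TopologicalSpace Z] (n : ℕ) : Type _ :=
  {p : Z × SubLe Z n // p.1 ∈ (p.2.1).toSet}

instance (Z : Type*) [TopologicalSpace Z] (n : ℕ) : TopologicalSpace (Inc Z n) :=
  inferInstanceAs (TopologicalSpace {p : Z × SubLe Z n // p.1 ∈ (p.2.1).toSet})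

/-- The projection `Z_[n]^⊆ → Z_[n]`. -/
def IncProj (Z : Type*) [TopologicalSpace Z] (n : ℕ) : Inc Z n → SubLe Z n :=
  fun p => p.1.2

/-- The canonical map `(Δ \ D)⁺ → Δ⁺` between one-point compactifications
induced by the inclusion `Δ \ D ⊆ Δ`. -/
def ptMap {Δ : Type*} (D : Set Δ) : OnePoint {a : Δ // a ∉ D} → OnePoint Δ :=
  Option.map Subtype.val

open Set Topology TopologicalSpace OnePoint

set_option linter.unusedSectionVars false

lemma isOpen_hyper_subset {Z : Type*} [TopologicalSpace Z] {W : Set Z} (hW : IsOpen W) :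
    IsOpen {A : Hyper Z | A.toSet ⊆ W} :=
  isOpen_generateFrom_of_mem ⟨W, hW, Or.inl rfl⟩

lemma isOpen_hyper_hit {Z : Type*} [TopologicalSpace Z] {W : Set Z} (hW : IsOpen W) :
    IsOpen {A : Hyper Z | (A.toSet ∩ W).Nonempty} :=
  isOpen_generateFrom_of_mem ⟨W, hW, Or.inr rfl⟩

section Aux
variable {Δ : Type*} [TopologicalSpace Δ] [DiscreteTopology Δ] (D : Set Δ)

lemma op_isOpen_iff {X : Type*} [TopologicalSpace X] [DiscreteTopology X]
    {s : Set (OnePoint X)} :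
    IsOpen s ↔ (∞ ∈ s → (((↑) : X → OnePoint X) ⁻¹' s)ᶜ.Finite) := by
  rw [OnePoint.isOpen_def]
  simp [isCompact_iff_finite, isOpen_discrete]

-- assume aux lemmas from part1 exist (copied in final file); here restate as axioms? no, copy.
lemma ptMap_injective : Function.Injective (ptMap D) :=
  Option.map_injective Subtype.val_injective

lemma ptMap_coe (a : {a : Δ // a ∉ D}) : ptMap D a = ((a : Δ) : OnePoint Δ) := rfl

lemma range_ptMap :
    Set.range (ptMap D) = ((fun a : Δ => (a : OnePoint Δ)) '' D)ᶜ := by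
  ext x
  cases x with
  | infty =>
    simp only [mem_range, mem_compl_iff, mem_image]
    constructor
    · rintro - ⟨a, -, h⟩; exact (OnePoint.coe_ne_infty a) h
    · intro _; exact ⟨∞, rfl⟩
  | coe a =>
    simp only [mem_range, mem_compl_iff, mem_image]
    constructor
    · rintro ⟨x', hx'⟩ ⟨b, hb, hba⟩
      cases x' with
      | infty => exact (OnePoint.infty_ne_coe a) hx'
      | coe a' =>
        rw [ptMap_coe, OnePoint.coe_eq_coe] at hx'
        rw [OnePoint.coe_eq_coe] at hba
        exact a'.2 (hx' ▸ hba ▸ hb)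
    · intro h
      refine ⟨(⟨a, fun ha => h ⟨a, ha, rfl⟩⟩ : {a : Δ // a ∉ D}), rfl⟩

lemma ptMap_continuous : Continuous (ptMap D) := by
  rw [continuous_def]
  intro V hV
  rw [op_isOpen_iff] at hV ⊢
  intro hinf
  have h' := hV hinf
  have : (((↑) : {a : Δ // a ∉ D} → OnePoint {a : Δ // a ∉ D}) ⁻¹' (ptMap D ⁻¹' V))ᶜ ⊆
      Subtype.val ⁻¹' ((((↑) : Δ → OnePoint Δ) ⁻¹' V)ᶜ) := fun a' ha' => ha'
  exact (h'.preimage Subtype.val_injective.injOn).subset this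

lemma ptMap_image_open {W : Set (OnePoint {a : Δ // a ∉ D})} (hW : IsOpen W)
    (hDfin : D.Finite) : IsOpen (ptMap D '' W) := by
  rw [op_isOpen_iff] at hW ⊢
  intro hinf
  obtain ⟨x, hxW, hx⟩ := hinf
  have hx' : x = ∞ := by
    cases x with
    | infty => rfl
    | coe a => exact absurd hx (OnePoint.coe_ne_infty _)
  subst hx'
  have h' := hW hxW
  have : (((↑) : Δ → OnePoint Δ) ⁻¹' (ptMap D '' W))ᶜ ⊆
      D ∪ Subtype.val '' ((((↑) : {a : Δ // a ∉ D} → OnePoint {a : Δ // a ∉ D}) ⁻¹' W)ᶜ) := by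
    intro a ha
    by_cases haD : a ∈ D
    · exact Or.inl haD
    · exact Or.inr ⟨⟨a, haD⟩, fun hmem => ha ⟨(⟨a, haD⟩ : {a : Δ // a ∉ D}), hmem, rfl⟩, rfl⟩
  exact (hDfin.union (h'.image _)).subset this

/-- The fixed part `D` viewed inside `OnePoint Δ`. -/
def Cset : Set (OnePoint Δ) := (fun a : Δ => (a : OnePoint Δ)) '' D

lemma infty_not_mem_Cset : ∞ ∉ Cset D := by
  rintro ⟨a, -, h⟩; exact OnePoint.coe_ne_infty a h

lemma Cset_open : IsOpen (Cset D) :=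
  op_isOpen_iff.mpr fun h => absurd h (infty_not_mem_Cset D)

lemma compl_singleton_open (c : OnePoint Δ) : IsOpen ({c}ᶜ : Set (OnePoint Δ)) := by
  rw [op_isOpen_iff]
  intro _
  rw [preimage_compl, compl_compl]
  exact (Set.subsingleton_singleton.preimage OnePoint.coe_injective).finite

lemma image_disjoint_Cset (A : Set (OnePoint {a : Δ // a ∉ D})) :
    Disjoint (ptMap D '' A) (Cset D) := by
  have h : ptMap D '' A ⊆ (Cset D)ᶜ :=
    (image_subset_range _ _).trans (range_ptMap D).le
  exact Set.disjoint_of_subset_left h disjoint_compl_left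

/-- The map `A ↦ ptMap D '' A ∪ Cset D` at the hyperspace level. -/
def ptG : Hyper (OnePoint {a : Δ // a ∉ D}) → Hyper (OnePoint Δ) :=
  fun A => (ptMap D '' A.toSet ∪ Cset D : Set (OnePoint Δ))

lemma toSet_ptG (A : Hyper (OnePoint {a : Δ // a ∉ D})) :
    (ptG D A).toSet = ptMap D '' A.toSet ∪ Cset D := rfl

lemma ptG_continuous : Continuous (ptG D) := by
  apply continuous_generateFrom_iff.mpr
  rintro s ⟨V, hV, rfl | rfl⟩
  · by_cases hC : Cset D ⊆ V
    · have he : ptG D ⁻¹' {x : Hyper (OnePoint Δ) | x.toSet ⊆ V} =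
          {A : Hyper (OnePoint {a : Δ // a ∉ D}) | A.toSet ⊆ ptMap D ⁻¹' V} := by
        ext A
        simp only [mem_preimage, mem_setOf_eq, toSet_ptG, union_subset_iff,
          image_subset_iff]
        tauto
      rw [he]
      exact isOpen_hyper_subset (hV.preimage (ptMap_continuous D))
    · have he : ptG D ⁻¹' {x : Hyper (OnePoint Δ) | x.toSet ⊆ V} = ∅ := by
        ext A
        simp only [mem_preimage, mem_setOf_eq, toSet_ptG, union_subset_iff, mem_empty_iff_false,
          iff_false]
        tauto
      rw [he]; exact isOpen_empty
  · by_cases hC : (Cset D ∩ V).Nonempty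
    · have he : ptG D ⁻¹' {x : Hyper (OnePoint Δ) | (x.toSet ∩ V).Nonempty} = univ := by
        ext A
        simp only [mem_preimage, mem_setOf_eq, toSet_ptG, mem_univ, iff_true, union_inter_distrib_right]
        exact hC.mono subset_union_right
      rw [he]; exact isOpen_univ
    · have he : ptG D ⁻¹' {x : Hyper (OnePoint Δ) | (x.toSet ∩ V).Nonempty} =
          {A : Hyper (OnePoint {a : Δ // a ∉ D}) | (A.toSet ∩ (ptMap D ⁻¹' V)).Nonempty} := by
        ext A
        simp only [mem_preimage, mem_setOf_eq, toSet_ptG, union_inter_distrib_right]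
        rw [Set.not_nonempty_iff_eq_empty] at hC
        rw [hC, union_empty, ← Set.image_inter_preimage, Set.image_nonempty]
      rw [he]
      exact isOpen_hyper_hit (hV.preimage (ptMap_continuous D))

lemma ptG_inducing (hDfin : D.Finite) : IsInducing (ptG D) := by
  constructor
  refine le_antisymm (continuous_iff_le_induced.mp (ptG_continuous D)) (le_generateFrom ?_)
  rintro s ⟨W, hW, rfl | rfl⟩
  · rw [isOpen_induced_iff]
    refine ⟨{x : Hyper (OnePoint Δ) | x.toSet ⊆ ptMap D '' W ∪ Cset D},
      isOpen_hyper_subset ((ptMap_image_open D hW hDfin).union (Cset_open D)), ?_⟩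
    ext A
    simp only [mem_preimage, mem_setOf_eq, toSet_ptG, union_subset_iff,
      subset_union_right, and_true]
    constructor
    · intro h a ha
      rcases h ⟨a, ha, rfl⟩ with ⟨b, hbW, hb⟩ | h'
      · rwa [← ptMap_injective D hb]
      · exact ((image_disjoint_Cset D A.toSet).le_bot ⟨⟨a, ha, rfl⟩, h'⟩).elim
    · intro h
      exact (Set.image_mono h).trans subset_union_left
  · rw [isOpen_induced_iff]
    refine ⟨{x : Hyper (OnePoint Δ) | (x.toSet ∩ (ptMap D '' W)).Nonempty},
      isOpen_hyper_hit (ptMap_image_open D hW hDfin), ?_⟩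
    ext A
    simp only [mem_preimage, mem_setOf_eq, toSet_ptG, union_inter_distrib_right]
    have h1 : Cset D ∩ (ptMap D '' W) = ∅ :=
      Set.disjoint_iff_inter_eq_empty.mp (image_disjoint_Cset D W).symm
    rw [h1, union_empty, ← Set.image_inter (ptMap_injective D), Set.image_nonempty]

end Aux


/-- For a `(d−2)`-element subset `D ⊆ Δ`, the map `z ↦ z ∪ D` is a closed
embedding of `(Δ \ D)⁺_(2)` into `Δ⁺_(d)`. -/
theorem stmt19 (Δ : Type*) [Infinite Δ] [TopologicalSpace Δ] [DiscreteTopology Δ]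
    (n d : ℕ) (hn : 2 ≤ n) (hd2 : 2 ≤ d) (hdn : d ≤ n)
    (D : Set Δ) (hDfin : D.Finite) (hDcard : D.ncard = d - 2) :
    ∃ F : SubEq (OnePoint {a : Δ // a ∉ D}) 2 → SubEq (OnePoint Δ) d,
      (∀ z, (F z).1.toSet =
        ptMap D '' z.1.toSet ∪ (fun a : Δ => (a : OnePoint Δ)) '' D) ∧
      Topology.IsClosedEmbedding F := by
  have hCfin : (Cset D).Finite := hDfin.image _
  have hCcard : (Cset D).ncard = d - 2 := by
    rw [Cset, Set.ncard_image_of_injective D OnePoint.coe_injective, hDcard]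
  -- the map
  have hwd : ∀ z : SubEq (OnePoint {a : Δ // a ∉ D}) 2,
      (ptG D z.1).toSet.Finite ∧ (ptG D z.1).toSet.ncard = d := by
    intro z
    have hfin : (ptG D z.1).toSet.Finite := (z.2.1.image _).union hCfin
    refine ⟨hfin, ?_⟩
    rw [toSet_ptG, Set.ncard_union_eq (image_disjoint_Cset D _) (z.2.1.image _) hCfin,
      Set.ncard_image_of_injective _ (ptMap_injective D), z.2.2, hCcard]
    omega
  refine ⟨fun z => ⟨ptG D z.1, hwd z⟩, fun z => rfl, ?_⟩
  set F : SubEq (OnePoint {a : Δ // a ∉ D}) 2 → SubEq (OnePoint Δ) d :=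
    fun z => ⟨ptG D z.1, hwd z⟩ with hF
  have hGval : ∀ z, (F z).1 = ptG D z.1 := fun z => rfl
  -- injectivity
  have hinj : Function.Injective F := by
    intro z z' h
    have h1 : ptG D z.1 = ptG D z'.1 := congrArg Subtype.val h
    have h2 : ptMap D '' z.1.toSet = ptMap D '' z'.1.toSet := by
      have e : ∀ A : Hyper (OnePoint {a : Δ // a ∉ D}),
          ptMap D '' A.toSet = (ptG D A).toSet \ Cset D := by
        intro A
        rw [toSet_ptG, Set.union_diff_cancel_right
          ((image_disjoint_Cset D A.toSet).inter_eq.le)]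
      rw [e, e, h1]
    have h3 : z.1.toSet = z'.1.toSet :=
      Set.image_injective.mpr (ptMap_injective D) h2
    exact Subtype.ext h3
  -- inducing
  have hind : IsInducing F := by
    constructor
    show TopologicalSpace.induced (Subtype.val : _ → Hyper (OnePoint {a : Δ // a ∉ D}))
        (instHyperTop _) =
      TopologicalSpace.induced F (TopologicalSpace.induced
        (Subtype.val : _ → Hyper (OnePoint Δ)) (instHyperTop _))
    rw [(ptG_inducing D hDfin).eq_induced, induced_compose]
    exact (induced_compose (f := F) (g := fun x : SubEq (OnePoint Δ) d => x.1)).symm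
  -- range
  have hrange : Set.range F = {x : SubEq (OnePoint Δ) d | Cset D ⊆ x.1.toSet} := by
    ext x
    constructor
    · rintro ⟨z, rfl⟩
      exact Set.subset_union_right
    · intro hx
      have hsfin : x.1.toSet.Finite := x.2.1
      have hscard : x.1.toSet.ncard = d := x.2.2
      have himg : ptMap D '' (ptMap D ⁻¹' x.1.toSet) = x.1.toSet \ Cset D := by
        rw [Set.image_preimage_eq_inter_range, range_ptMap, ← Set.diff_eq]; rfl
      have hpfin : (ptMap D ⁻¹' x.1.toSet).Finite :=
        hsfin.preimage (ptMap_injective D).injOn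
      have hpcard : (ptMap D ⁻¹' x.1.toSet).ncard = 2 := by
        have h1 : (ptMap D '' (ptMap D ⁻¹' x.1.toSet)).ncard =
            (ptMap D ⁻¹' x.1.toSet).ncard :=
          Set.ncard_image_of_injective _ (ptMap_injective D)
        rw [himg, Set.ncard_diff hx hCfin, hscard, hCcard] at h1
        omega
      refine ⟨⟨(ptMap D ⁻¹' x.1.toSet : Set _), hpfin, hpcard⟩, ?_⟩
      apply Subtype.ext
      show ptG D _ = x.1
      show (ptMap D '' (ptMap D ⁻¹' x.1.toSet) ∪ Cset D : Set (OnePoint Δ)) = x.1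
      rw [himg, Set.diff_union_of_subset hx]
      rfl
  have hclosed : IsClosed (Set.range F) := by
    rw [hrange, ← isOpen_compl_iff]
    have he : {x : SubEq (OnePoint Δ) d | Cset D ⊆ x.1.toSet}ᶜ =
        ⋃ c ∈ Cset D, {x : SubEq (OnePoint Δ) d | x.1.toSet ⊆ ({c}ᶜ : Set (OnePoint Δ))} := by
      ext x
      simp [Set.not_subset, Set.subset_compl_singleton_iff]
    rw [he]
    refine isOpen_biUnion fun c _ => ?_
    have : {x : SubEq (OnePoint Δ) d | x.1.toSet ⊆ ({c}ᶜ : Set (OnePoint Δ))} =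
        (Subtype.val : SubEq (OnePoint Δ) d → Hyper (OnePoint Δ)) ⁻¹'
          {A : Hyper (OnePoint Δ) | A.toSet ⊆ ({c}ᶜ : Set (OnePoint Δ))} := rfl
    rw [this]
    exact (isOpen_hyper_subset (compl_singleton_open c)).preimage continuous_subtype_val
  exact ⟨⟨hind, hinj⟩, hclosed⟩
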